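/- Fix an integer k ≥ 1. For every function u in U̅^{(0),k}(Ω∞) = Q^{k,k,k−1}_k + span{(x,y,z) ↦ z^k/(1+z)^k} (all such u are smooth on Ω∞°), the gradient ∇u, viewed as a function Ω∞° → ℝ³, belongs to the space (Q^{k−1,k,k−1}_{k+1} × Q^{k,k−1,k−1}_{k+1} × Q^{k,k,k−2}_{k+1}) + span{ (x,y,z) ↦ (z^{k−1}/(1+z)^{k+1})·( z·∂r/∂x, z·∂r/∂y, −r ) : r ∈ Q^{k,k}[x,y] }; i.e. the gradient maps U̅^{(0),k}(Ω∞) into U̅^{(1),k}(Ω∞). -/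

import Mathlib

noncomputable section

/-- The interior `Ω∞° = (0,1) × (0,1) × (0,∞)` of the infinite pyramid. -/
def PyrInfInt : Set (ℝ × ℝ × ℝ) :=
  {p | 0 < p.1 ∧ p.1 < 1 ∧ 0 < p.2.1 ∧ p.2.1 < 1 ∧ 0 < p.2.2}

/-- The weighted monomial `x^a y^b z^c / (1+z)^k`. -/
def qmon (k a b c : ℕ) : ℝ × ℝ × ℝ → ℝ :=
  fun p => p.1 ^ a * p.2.1 ^ b * p.2.2 ^ c / (1 + p.2.2) ^ k

/-- The space `Q^{l,m,n}_k`: the real span of `x^a y^b z^c/(1+z)^k` over `0 ≤ a ≤ l`,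
`0 ≤ b ≤ m`, `0 ≤ c ≤ n` (the zero space if some bound is negative). -/
def Qsp (l m n : ℤ) (k : ℕ) : Submodule ℝ ((ℝ × ℝ × ℝ) → ℝ) :=
  Submodule.span ℝ
    {f | ∃ a b c : ℕ, (a : ℤ) ≤ l ∧ (b : ℤ) ≤ m ∧ (c : ℤ) ≤ n ∧ f = qmon k a b c}

/-- The underlying space `U̅^{(0),k}(Ω∞) = Q^{k,k,k−1}_k + span{z^k/(1+z)^k}`. -/
def Ubar0 (k : ℕ) : Submodule ℝ ((ℝ × ℝ × ℝ) → ℝ) :=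
  Qsp k k ((k : ℤ) - 1) k ⊔
    Submodule.span ℝ {fun p : ℝ × ℝ × ℝ => p.2.2 ^ k / (1 + p.2.2) ^ k}

open MvPolynomial in
/-- The target property: `u` is differentiable on the open pyramid and its gradient has the
required representation. -/
def GG (k : ℕ) (u : (ℝ × ℝ × ℝ) → ℝ) : Prop :=
  (∀ p ∈ PyrInfInt, DifferentiableAt ℝ u p) ∧
    ∃ v₁ ∈ Qsp ((k : ℤ) - 1) k ((k : ℤ) - 1) (k + 1),
    ∃ v₂ ∈ Qsp k ((k : ℤ) - 1) ((k : ℤ) - 1) (k + 1),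
    ∃ v₃ ∈ Qsp k k ((k : ℤ) - 2) (k + 1),
    ∃ r : MvPolynomial (Fin 2) ℝ,
      (∀ d ∈ r.support, d 0 ≤ k ∧ d 1 ≤ k) ∧
      ∀ p ∈ PyrInfInt,
        fderiv ℝ u p ((1 : ℝ), (0 : ℝ), (0 : ℝ)) =
          v₁ p + p.2.2 ^ (k - 1) / (1 + p.2.2) ^ (k + 1) *
            (p.2.2 * MvPolynomial.eval ![p.1, p.2.1] (MvPolynomial.pderiv 0 r)) ∧
        fderiv ℝ u p ((0 : ℝ), (1 : ℝ), (0 : ℝ)) =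
          v₂ p + p.2.2 ^ (k - 1) / (1 + p.2.2) ^ (k + 1) *
            (p.2.2 * MvPolynomial.eval ![p.1, p.2.1] (MvPolynomial.pderiv 1 r)) ∧
        fderiv ℝ u p ((0 : ℝ), (0 : ℝ), (1 : ℝ)) =
          v₃ p - p.2.2 ^ (k - 1) / (1 + p.2.2) ^ (k + 1) *
            MvPolynomial.eval ![p.1, p.2.1] r

lemma mem_Qsp {l m n : ℤ} {k a b c : ℕ} (ha : (a : ℤ) ≤ l) (hb : (b : ℤ) ≤ m)
    (hc : (c : ℤ) ≤ n) : qmon k a b c ∈ Qsp l m n k :=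
  Submodule.subset_span ⟨a, b, c, ha, hb, hc, rfl⟩

lemma qmon_hasFDerivAt (k a b c : ℕ) (p : ℝ × ℝ × ℝ) (hz : 0 < p.2.2) :
    ∃ L : (ℝ × ℝ × ℝ) →L[ℝ] ℝ, HasFDerivAt (qmon k a b c) L p ∧
      L (1,0,0) = (a:ℝ) * p.1^(a-1) * p.2.1^b * p.2.2^c / (1+p.2.2)^k ∧
      L (0,1,0) = (b:ℝ) * p.1^a * p.2.1^(b-1) * p.2.2^c / (1+p.2.2)^k ∧
      L (0,0,1) = p.1^a * p.2.1^b *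
        (p.2.2^c * (-(((1+p.2.2)^k)^2)⁻¹ * ((k:ℝ) * (1+p.2.2)^(k-1)))
          + ((1+p.2.2)^k)⁻¹ * ((c:ℝ) * p.2.2^(c-1))) := by
  have hw : (0:ℝ) < 1 + p.2.2 := by linarith
  have hwne : (1 + p.2.2) ^ k ≠ 0 := pow_ne_zero _ (ne_of_gt hw)
  have h1 : HasFDerivAt (fun q : ℝ × ℝ × ℝ => q.1) (ContinuousLinearMap.fst ℝ ℝ (ℝ × ℝ)) p :=
    hasFDerivAt_fst
  have h2 : HasFDerivAt (fun q : ℝ × ℝ × ℝ => q.2.1)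
      ((ContinuousLinearMap.fst ℝ ℝ ℝ).comp (ContinuousLinearMap.snd ℝ ℝ (ℝ × ℝ))) p :=
    hasFDerivAt_fst.comp p hasFDerivAt_snd
  have h3 : HasFDerivAt (fun q : ℝ × ℝ × ℝ => q.2.2)
      ((ContinuousLinearMap.snd ℝ ℝ ℝ).comp (ContinuousLinearMap.snd ℝ ℝ (ℝ × ℝ))) p :=
    hasFDerivAt_snd.comp p hasFDerivAt_snd
  have hX := (hasDerivAt_pow a p.1).comp_hasFDerivAt p h1
  have hY := (hasDerivAt_pow b p.2.1).comp_hasFDerivAt p h2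
  have hW : HasFDerivAt (fun q : ℝ × ℝ × ℝ => 1 + q.2.2) _ p := (hasFDerivAt_const (1:ℝ) p).add h3
  have hZ := (hasDerivAt_pow c p.2.2).comp_hasFDerivAt p h3
  have hWk := (hasDerivAt_pow k (1 + p.2.2)).comp_hasFDerivAt p hW
  have hInv := (hasDerivAt_inv hwne).comp_hasFDerivAt p hWk
  have H := (hX.mul hY).mul (hZ.mul hInv)
  have hq : qmon k a b c
      = fun q : ℝ × ℝ × ℝ => q.1 ^ a * q.2.1 ^ b * (q.2.2 ^ c * ((1 + q.2.2) ^ k)⁻¹) := by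
    funext q; simp [qmon, div_eq_mul_inv, mul_assoc]
  refine ⟨_, (by rw [hq]; exact H), ?_, ?_, ?_⟩ <;>
    simp [ContinuousLinearMap.add_apply, ContinuousLinearMap.smul_apply, Function.comp,
      div_eq_mul_inv] <;> ring

open MvPolynomial in
lemma eval_monomial_fin2 (x y α : ℝ) (t : Fin 2 →₀ ℕ) :
    eval ![x, y] (monomial t α) = α * x ^ (t 0) * y ^ (t 1) := by
  rw [MvPolynomial.eval_monomial, Finsupp.prod_fintype _ _ (fun i => pow_zero _),
    Fin.prod_univ_two]
  simp [mul_assoc]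

open MvPolynomial in
lemma eval_pderiv_mon (x y α : ℝ) (a b : ℕ) :
    eval ![x, y] (pderiv 0 (monomial (Finsupp.single (0:Fin 2) a + Finsupp.single 1 b) α))
      = α * a * x ^ (a - 1) * y ^ b ∧
    eval ![x, y] (pderiv 1 (monomial (Finsupp.single (0:Fin 2) a + Finsupp.single 1 b) α))
      = α * b * x ^ a * y ^ (b - 1) ∧
    eval ![x, y] (monomial (Finsupp.single (0:Fin 2) a + Finsupp.single 1 b) α)
      = α * x ^ a * y ^ b := by
  refine ⟨?_, ?_, ?_⟩
  · rw [MvPolynomial.pderiv_monomial, eval_monomial_fin2]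
    simp [Finsupp.tsub_apply, Finsupp.single_apply]
  · rw [MvPolynomial.pderiv_monomial, eval_monomial_fin2]
    simp [Finsupp.tsub_apply, Finsupp.single_apply]
  · rw [eval_monomial_fin2]
    simp [Finsupp.single_apply]

lemma GG_zero (k : ℕ) : GG k 0 := by
  refine ⟨fun p _ => (differentiableAt_const (0:ℝ)), 0, Submodule.zero_mem _, 0,
    Submodule.zero_mem _, 0, Submodule.zero_mem _, 0, by simp, fun p hp => ?_⟩
  have h : fderiv ℝ (0 : (ℝ × ℝ × ℝ) → ℝ) p = 0 := fderiv_const_apply (0:ℝ)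
  rw [h]
  simp

lemma GG_add {k : ℕ} {u₁ u₂ : (ℝ × ℝ × ℝ) → ℝ} (h₁ : GG k u₁) (h₂ : GG k u₂) :
    GG k (u₁ + u₂) := by
  obtain ⟨d₁, v₁, hv₁, v₂, hv₂, v₃, hv₃, r, hr, he⟩ := h₁
  obtain ⟨d₂, w₁, hw₁, w₂, hw₂, w₃, hw₃, s, hs, hf⟩ := h₂
  refine ⟨fun p hp => (d₁ p hp).add (d₂ p hp), v₁ + w₁, Submodule.add_mem _ hv₁ hw₁,
    v₂ + w₂, Submodule.add_mem _ hv₂ hw₂, v₃ + w₃, Submodule.add_mem _ hv₃ hw₃,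
    r + s, ?_, fun p hp => ?_⟩
  · intro d hd
    rcases Finset.mem_union.1 (MvPolynomial.support_add hd) with h | h
    · exact hr d h
    · exact hs d h
  · have hD : fderiv ℝ (u₁ + u₂) p = fderiv ℝ u₁ p + fderiv ℝ u₂ p :=
      fderiv_add (d₁ p hp) (d₂ p hp)
    obtain ⟨e1, e2, e3⟩ := he p hp
    obtain ⟨f1, f2, f3⟩ := hf p hp
    rw [hD]
    simp only [ContinuousLinearMap.add_apply, Pi.add_apply, map_add, e1, e2, e3, f1, f2, f3]
    refine ⟨by ring, by ring, by ring⟩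

lemma GG_smul {k : ℕ} (a : ℝ) {u : (ℝ × ℝ × ℝ) → ℝ} (h : GG k u) : GG k (a • u) := by
  obtain ⟨d, v₁, hv₁, v₂, hv₂, v₃, hv₃, r, hr, he⟩ := h
  refine ⟨fun p hp => (d p hp).const_smul a, a • v₁, Submodule.smul_mem _ _ hv₁,
    a • v₂, Submodule.smul_mem _ _ hv₂, a • v₃, Submodule.smul_mem _ _ hv₃,
    a • r, fun d hd => hr d (MvPolynomial.support_smul hd), fun p hp => ?_⟩
  have hD : fderiv ℝ (a • u) p = a • fderiv ℝ u p := fderiv_const_smul (d p hp) a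
  obtain ⟨e1, e2, e3⟩ := he p hp
  rw [hD]
  simp only [ContinuousLinearMap.smul_apply, Pi.smul_apply, smul_eq_mul,
    Derivation.map_smul, MvPolynomial.smul_eval, e1, e2, e3]
  refine ⟨by ring, by ring, by ring⟩

open MvPolynomial in
lemma GG_qmon {k a b c : ℕ} (hk : 1 ≤ k) (ha : (a : ℤ) ≤ k) (hb : (b : ℤ) ≤ k)
    (hc : (c : ℤ) ≤ (k : ℤ) - 1) : GG k (qmon k a b c) := by
  constructor
  · intro p hp
    obtain ⟨L, HL, -⟩ := qmon_hasFDerivAt k a b c p hp.2.2.2.2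
    exact HL.differentiableAt
  have hck : c + 1 ≤ k := by omega
  rcases eq_or_lt_of_le hck with hA | hB
  · -- c + 1 = k
    subst hA
    refine ⟨(a:ℝ) • qmon (c+1+1) (a-1) b c,
      Submodule.smul_mem _ _ (mem_Qsp (by omega) (by omega) (by omega)),
      (b:ℝ) • qmon (c+1+1) a (b-1) c,
      Submodule.smul_mem _ _ (mem_Qsp (by omega) (by omega) (by omega)),
      (c:ℝ) • qmon (c+1+1) a b (c-1), ?_,
      monomial (Finsupp.single (0:Fin 2) a + Finsupp.single 1 b) 1, ?_, ?_⟩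
    · rcases Nat.eq_zero_or_pos c with rfl | hcpos
      · simpa using Submodule.zero_mem _
      · exact Submodule.smul_mem _ _ (mem_Qsp (by omega) (by omega) (by omega))
    · intro d hd
      rw [MvPolynomial.support_monomial, if_neg one_ne_zero, Finset.mem_singleton] at hd
      subst hd
      constructor <;> simp [Finsupp.add_apply, Finsupp.single_apply] <;> omega
    · intro p hp
      have hz : 0 < p.2.2 := hp.2.2.2.2
      have hw : (0:ℝ) < 1 + p.2.2 := by linarith
      have hwne : (1:ℝ) + p.2.2 ≠ 0 := ne_of_gt hw
      obtain ⟨L, HL, e1, e2, e3⟩ := qmon_hasFDerivAt (c+1) a b c p hz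
      obtain ⟨E1, E2, E3⟩ := eval_pderiv_mon p.1 p.2.1 1 a b
      rw [HL.fderiv]
      refine ⟨?_, ?_, ?_⟩
      · rw [e1, E1]
        simp only [Pi.smul_apply, smul_eq_mul, qmon, Nat.add_sub_cancel]
        field_simp
        ring
      · rw [e2, E2]
        simp only [Pi.smul_apply, smul_eq_mul, qmon, Nat.add_sub_cancel]
        field_simp
        ring
      · rw [e3, E3]
        simp only [Pi.smul_apply, smul_eq_mul, qmon, Nat.add_sub_cancel]
        rcases c with _ | c
        · push_cast
          field_simp
          ring
        · simp only [Nat.add_sub_cancel]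
          push_cast
          field_simp
          ring
  · -- c + 1 < k
    obtain ⟨j, rfl⟩ : ∃ j, k = j + 1 := ⟨k - 1, by omega⟩
    refine ⟨(a:ℝ) • qmon (j+2) (a-1) b c + (a:ℝ) • qmon (j+2) (a-1) b (c+1),
      Submodule.add_mem _
        (Submodule.smul_mem _ _ (mem_Qsp (by omega) (by omega) (by omega)))
        (Submodule.smul_mem _ _ (mem_Qsp (by omega) (by omega) (by omega))),
      (b:ℝ) • qmon (j+2) a (b-1) c + (b:ℝ) • qmon (j+2) a (b-1) (c+1),
      Submodule.add_mem _
        (Submodule.smul_mem _ _ (mem_Qsp (by omega) (by omega) (by omega)))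
        (Submodule.smul_mem _ _ (mem_Qsp (by omega) (by omega) (by omega))),
      (c:ℝ) • qmon (j+2) a b (c-1) + ((c:ℝ) - ((j:ℝ)+1)) • qmon (j+2) a b c, ?_,
      0, by simp, ?_⟩
    · refine Submodule.add_mem _ ?_
        (Submodule.smul_mem _ _ (mem_Qsp (by omega) (by omega) (by omega)))
      rcases Nat.eq_zero_or_pos c with rfl | hcpos
      · simpa using Submodule.zero_mem _
      · exact Submodule.smul_mem _ _ (mem_Qsp (by omega) (by omega) (by omega))
    · intro p hp
      have hz : 0 < p.2.2 := hp.2.2.2.2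
      have hw : (0:ℝ) < 1 + p.2.2 := by linarith
      have hwne : (1:ℝ) + p.2.2 ≠ 0 := ne_of_gt hw
      obtain ⟨L, HL, e1, e2, e3⟩ := qmon_hasFDerivAt (j+1) a b c p hz
      rw [HL.fderiv]
      refine ⟨?_, ?_, ?_⟩
      · rw [e1]
        simp only [Pi.add_apply, Pi.smul_apply, smul_eq_mul, qmon, map_zero, mul_zero, add_zero,
          Nat.add_sub_cancel]
        field_simp
        ring
      · rw [e2]
        simp only [Pi.add_apply, Pi.smul_apply, smul_eq_mul, qmon, map_zero, mul_zero, add_zero,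
          Nat.add_sub_cancel]
        field_simp
        ring
      · rw [e3]
        simp only [Pi.add_apply, Pi.smul_apply, smul_eq_mul, qmon, map_zero, mul_zero, sub_zero,
          Nat.add_sub_cancel]
        rcases c with _ | c
        · push_cast
          field_simp
          ring
        · simp only [Nat.add_sub_cancel]
          push_cast
          field_simp
          ring

open MvPolynomial in
lemma GG_extra {k : ℕ} (hk : 1 ≤ k) :
    GG k (fun p : ℝ × ℝ × ℝ => p.2.2 ^ k / (1 + p.2.2) ^ k) := by
  have hqe : (fun p : ℝ × ℝ × ℝ => p.2.2 ^ k / (1 + p.2.2) ^ k) = qmon k 0 0 k := by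
    funext p; simp [qmon]
  rw [hqe]
  constructor
  · intro p hp
    obtain ⟨L, HL, -⟩ := qmon_hasFDerivAt k 0 0 k p hp.2.2.2.2
    exact HL.differentiableAt
  obtain ⟨j, rfl⟩ : ∃ j, k = j + 1 := ⟨k - 1, by omega⟩
  refine ⟨0, Submodule.zero_mem _, 0, Submodule.zero_mem _, 0, Submodule.zero_mem _,
    MvPolynomial.C (-((j:ℝ)+1)), ?_, ?_⟩
  · intro d hd
    have hne : -((j:ℝ)+1) ≠ 0 := by
      intro h
      have : (j:ℝ) + 1 = 0 := by linarith [neg_eq_zero.mp h]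
      nlinarith [Nat.cast_nonneg (α := ℝ) j]
    rw [MvPolynomial.C_apply, MvPolynomial.support_monomial, if_neg hne,
      Finset.mem_singleton] at hd
    subst hd
    simp
  · intro p hp
    have hz : 0 < p.2.2 := hp.2.2.2.2
    have hw : (0:ℝ) < 1 + p.2.2 := by linarith
    have hwne : (1:ℝ) + p.2.2 ≠ 0 := ne_of_gt hw
    obtain ⟨L, HL, e1, e2, e3⟩ := qmon_hasFDerivAt (j+1) 0 0 (j+1) p hz
    rw [HL.fderiv]
    refine ⟨?_, ?_, ?_⟩
    · rw [e1]; simp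
    · rw [e2]; simp
    · rw [e3]
      simp only [Pi.zero_apply, MvPolynomial.eval_C, Nat.add_sub_cancel, Nat.cast_zero,
        pow_zero, Nat.cast_ofNat, zero_sub, Nat.cast_add, Nat.cast_one]
      push_cast
      field_simp
      ring

/-- for every `u ∈ U̅^{(0),k}(Ω∞)` the gradient `∇u` on `Ω∞°` belongs to
`U̅^{(1),k}(Ω∞) = (Q^{k−1,k,k−1}_{k+1} × Q^{k,k−1,k−1}_{k+1} × Q^{k,k,k−2}_{k+1})
+ span{ (z^{k−1}/(1+z)^{k+1})·(z·rₓ, z·r_y, −r) : r ∈ Q^{k,k}[x,y] }`. -/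
theorem grad_Ubar0_mem_Ubar1 (k : ℕ) (hk : 1 ≤ k)
    (u : (ℝ × ℝ × ℝ) → ℝ) (hu : u ∈ Ubar0 k) :
    ∃ v₁ ∈ Qsp ((k : ℤ) - 1) k ((k : ℤ) - 1) (k + 1),
    ∃ v₂ ∈ Qsp k ((k : ℤ) - 1) ((k : ℤ) - 1) (k + 1),
    ∃ v₃ ∈ Qsp k k ((k : ℤ) - 2) (k + 1),
    ∃ r : MvPolynomial (Fin 2) ℝ,
      (∀ d ∈ r.support, d 0 ≤ k ∧ d 1 ≤ k) ∧
      ∀ p ∈ PyrInfInt,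
        fderiv ℝ u p ((1 : ℝ), (0 : ℝ), (0 : ℝ)) =
          v₁ p + p.2.2 ^ (k - 1) / (1 + p.2.2) ^ (k + 1) *
            (p.2.2 * MvPolynomial.eval ![p.1, p.2.1] (MvPolynomial.pderiv 0 r)) ∧
        fderiv ℝ u p ((0 : ℝ), (1 : ℝ), (0 : ℝ)) =
          v₂ p + p.2.2 ^ (k - 1) / (1 + p.2.2) ^ (k + 1) *
            (p.2.2 * MvPolynomial.eval ![p.1, p.2.1] (MvPolynomial.pderiv 1 r)) ∧
        fderiv ℝ u p ((0 : ℝ), (0 : ℝ), (1 : ℝ)) =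
          v₃ p - p.2.2 ^ (k - 1) / (1 + p.2.2) ^ (k + 1) *
            MvPolynomial.eval ![p.1, p.2.1] r := by
  have hGG : GG k u := by
    rw [Ubar0, Submodule.mem_sup] at hu
    obtain ⟨f, hf, g, hg, rfl⟩ := hu
    have h1 : GG k f := by
      rw [Qsp] at hf
      refine Submodule.span_induction ?_ (GG_zero k) (fun x y _ _ hx hy => GG_add hx hy)
        (fun a x _ hx => GG_smul a hx) hf
      rintro x ⟨a, b, c, ha, hb, hc, rfl⟩
      exact GG_qmon hk ha hb hc
    have h2 : GG k g := by
      refine Submodule.span_induction ?_ (GG_zero k) (fun x y _ _ hx hy => GG_add hx hy)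
        (fun a x _ hx => GG_smul a hx) hg
      rintro x hx
      rw [Set.mem_singleton_iff] at hx
      subst hx
      exact GG_extra hk
    exact GG_add h1 h2
  exact hGG.2

end
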